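/- Transversal gauge: let β : ℝ² → ℝ be a C¹ function and define the vector field A : ℝ² → ℝ² by A(x) := ( ∫₀¹ t β(t·x) dt ) · (−x₂, x₁). Then A is C¹ and ∂₁A₂(x) − ∂₂A₁(x) = β(x) for every x ∈ ℝ². -/

import Mathlib

open MeasureTheory Real intervalIntegral

set_option synthInstance.maxHeartbeats 1000000
set_option maxHeartbeats 1000000
set_option linter.unusedSectionVars false

noncomputable section

abbrev R2 : Type := EuclideanSpace ℝ (Fin 2)

def pdR (i : Fin 2) (g : R2 → ℝ) (x : R2) : ℝ := fderiv ℝ g x (EuclideanSpace.single i 1)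

/-- rotation by 90 degrees: `(x₁, x₂) ↦ (−x₂, x₁)` -/
def rot (x : R2) : R2 := (WithLp.equiv 2 (Fin 2 → ℝ)).symm ![-(x 1), x 0]

/-- the transversal gauge potential `A(x) = (∫₀¹ t β(t·x) dt) · (−x₂, x₁)` -/
def transversalGauge (β : R2 → ℝ) (x : R2) : R2 :=
  (∫ t in (0:ℝ)..1, t * β (t • x)) • rot x

namespace TGaux

variable (β : R2 → ℝ)

def phi (x : R2) : ℝ := ∫ t in (0:ℝ)..1, t * β (t • x)

def psi (x : R2) : R2 →L[ℝ] ℝ := ∫ t in (0:ℝ)..1, (t * t) • fderiv ℝ β (t • x)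

variable {β} (hβ : ContDiff ℝ 1 β)
include hβ

lemma cont_fd : Continuous (fderiv ℝ β) := hβ.continuous_fderiv one_ne_zero

lemma hasFDerivAt_phi (x₀ : R2) : HasFDerivAt (phi β) (psi β x₀) x₀ := by
  have hc : Continuous β := hβ.continuous
  have hc' : Continuous (fderiv ℝ β) := hβ.continuous_fderiv one_ne_zero
  obtain ⟨C, hC⟩ := (isCompact_closedBall (0 : R2) (‖x₀‖ + 1)).exists_bound_of_continuousOn
    (hβ.continuous_fderiv one_ne_zero).continuousOn
  have hmem : ∀ t ∈ Set.uIoc (0:ℝ) 1, ∀ x ∈ Metric.ball x₀ 1,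
      t • x ∈ Metric.closedBall (0 : R2) (‖x₀‖ + 1) := by
    intro t ht x hx
    rw [Set.uIoc_of_le zero_le_one] at ht
    rw [Metric.mem_closedBall, dist_zero_right, norm_smul, Real.norm_eq_abs,
      abs_of_pos ht.1]
    have hxn : ‖x‖ ≤ ‖x₀‖ + 1 := by
      have := norm_sub_norm_le x x₀
      have hd : ‖x - x₀‖ < 1 := by rwa [← dist_eq_norm, ← Metric.mem_ball]
      linarith
    nlinarith [norm_nonneg x, ht.2]
  have hdiff : ∀ t ∈ Set.uIoc (0:ℝ) 1, ∀ x ∈ Metric.ball x₀ 1,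
      HasFDerivAt (fun y => t * β (t • y)) ((t * t) • fderiv ℝ β (t • x)) x := by
    intro t ht x hx
    have h1 : HasFDerivAt β (fderiv ℝ β (t • x)) (t • x) :=
      (hβ.differentiable one_ne_zero (t • x)).hasFDerivAt
    have h2 : HasFDerivAt (fun y : R2 => t • y)
        (t • ContinuousLinearMap.id ℝ R2) x := (hasFDerivAt_id x).const_smul t
    have h3 := (h1.comp x h2).const_mul t
    refine h3.congr_fderiv ?_
    ext v
    simp [mul_comm, mul_assoc]
  have key := intervalIntegral.hasFDerivAt_integral_of_dominated_of_fderiv_le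
    (F := fun x t => t * β (t • x)) (F' := fun x t => (t * t) • fderiv ℝ β (t • x))
    (bound := fun _ => C) (μ := volume) (a := 0) (b := 1) (x₀ := x₀) (Metric.ball_mem_nhds x₀ one_pos)
    (Filter.Eventually.of_forall fun x =>
      (Continuous.aestronglyMeasurable (by fun_prop)))
    (Continuous.intervalIntegrable (by fun_prop) _ _)
    (Continuous.aestronglyMeasurable (by fun_prop)).restrict
    (Filter.Eventually.of_forall ?_)
    intervalIntegrable_const
    (Filter.Eventually.of_forall hdiff)
  · exact key
  · intro t ht x hx
    have hCt := hC _ (hmem t ht x hx)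
    rw [Set.uIoc_of_le zero_le_one] at ht
    have hns : ‖(t * t) • fderiv ℝ β (t • x)‖ = |t * t| * ‖fderiv ℝ β (t • x)‖ := by
      rw [norm_smul, Real.norm_eq_abs]
    rw [hns, abs_of_pos (by nlinarith [ht.1] : (0:ℝ) < t * t)]
    have h0 : (0:ℝ) ≤ ‖fderiv ℝ β (t • x)‖ := norm_nonneg _
    have h1 : t * t ≤ 1 := by nlinarith [ht.1, ht.2]
    nlinarith [mul_le_mul_of_nonneg_right h1 h0]

lemma contDiff_phi : ContDiff ℝ 1 (phi β) := by
  rw [contDiff_one_iff_fderiv]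
  have hfd : ∀ x, fderiv ℝ (phi β) x = psi β x :=
    fun x => (hasFDerivAt_phi hβ x).fderiv
  refine ⟨fun x => (hasFDerivAt_phi hβ x).differentiableAt, ?_⟩
  have : Continuous (psi β) := by
    apply continuous_parametric_intervalIntegral_of_continuous'
    have := hβ.continuous_fderiv one_ne_zero
    fun_prop
  simpa only [funext hfd]

lemma contDiff_rot : ContDiff ℝ 1 rot := by
  rw [show rot = fun x : R2 => (WithLp.equiv 2 (Fin 2 → ℝ)).symm ![-(x 1), x 0] from rfl]
  apply contDiff_euclidean.2
  intro i
  have hcoord : ∀ j : Fin 2, ContDiff ℝ 1 fun x : R2 => x j :=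
    fun j => contDiff_euclidean.1 contDiff_id j
  fin_cases i <;> simp [rot, WithLp.equiv_symm_apply]
  · exact (hcoord 1).neg
  · exact hcoord 0

lemma contDiff_A : ContDiff ℝ 1 (transversalGauge β) := by
  have : transversalGauge β = fun x => phi β x • rot x := rfl
  rw [this]
  exact (contDiff_phi hβ).smul (contDiff_rot hβ)

lemma two_phi_add_psi (x : R2) : 2 * phi β x + psi β x x = β x := by
  have hc : Continuous β := hβ.continuous
  have hc' : Continuous (fderiv ℝ β) := hβ.continuous_fderiv one_ne_zero
  have hder : ∀ t ∈ Set.uIcc (0:ℝ) 1, HasDerivAt (fun s => s ^ 2 * β (s • x))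
      (2 * t * β (t • x) + t ^ 2 * (fderiv ℝ β (t • x)) x) t := by
    intro t _
    have h1 : HasDerivAt (fun s : ℝ => s ^ 2) (2 * t) t := by
      simpa using hasDerivAt_pow 2 t
    have h2 : HasDerivAt (fun s : ℝ => β (s • x)) ((fderiv ℝ β (t • x)) x) t := by
      have hsm : HasDerivAt (fun s : ℝ => s • x) x t := by
        simpa using (hasDerivAt_id t).smul_const x
      have hb : HasFDerivAt β (fderiv ℝ β (t • x)) (t • x) :=
        (hβ.differentiable one_ne_zero (t • x)).hasFDerivAt
      exact hb.comp_hasDerivAt t hsm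
    exact h1.mul h2
  have hint : ∫ t in (0:ℝ)..1, (2 * t * β (t • x) + t ^ 2 * (fderiv ℝ β (t • x)) x)
      = β x := by
    rw [intervalIntegral.integral_eq_sub_of_hasDerivAt hder
      (Continuous.intervalIntegrable (by fun_prop) _ _)]
    simp
  rw [← hint]
  have hint1 : IntervalIntegrable (fun t => 2 * (t * β (t • x))) volume 0 1 :=
    Continuous.intervalIntegrable (by fun_prop) _ _
  have hint2 : IntervalIntegrable (fun t => (t * t) * (fderiv ℝ β (t • x)) x) volume 0 1 :=
    Continuous.intervalIntegrable (by fun_prop) _ _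
  have hpsix : psi β x x = ∫ t in (0:ℝ)..1, (t * t) * (fderiv ℝ β (t • x)) x := by
    rw [psi, ContinuousLinearMap.intervalIntegral_apply
      (Continuous.intervalIntegrable (by fun_prop) _ _)]
    simp [ContinuousLinearMap.smul_apply, smul_eq_mul]
  have hphix : 2 * phi β x = ∫ t in (0:ℝ)..1, 2 * (t * β (t • x)) := by
    rw [phi, intervalIntegral.integral_const_mul]
  rw [hpsix, hphix, ← intervalIntegral.integral_add hint1 hint2]
  apply intervalIntegral.integral_congr
  intro t _
  ring

end TGaux

/-- The transversal gauge of a `C¹` field `β` is a `C¹` vector potential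
with `curl A = β`. -/
theorem transversal_gauge_curl (β : R2 → ℝ) (hβ : ContDiff ℝ 1 β) :
    ContDiff ℝ 1 (transversalGauge β) ∧
      ∀ x : R2,
        pdR 0 (fun z => transversalGauge β z 1) x
          - pdR 1 (fun z => transversalGauge β z 0) x = β x := by
  refine ⟨TGaux.contDiff_A hβ, fun x => ?_⟩
  have hφ := TGaux.hasFDerivAt_phi hβ x
  set ψ := TGaux.psi β x with hψdef
  have hA1 : (fun z => transversalGauge β z 1) = fun z => TGaux.phi β z * z 0 := by
    funext z
    simp [transversalGauge, TGaux.phi, rot, WithLp.equiv_symm_apply, PiLp.smul_apply,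
      smul_eq_mul]
  have hA0 : (fun z => transversalGauge β z 0) = fun z => TGaux.phi β z * (-(z 1)) := by
    funext z
    simp [transversalGauge, TGaux.phi, rot, WithLp.equiv_symm_apply, PiLp.smul_apply,
      smul_eq_mul]
  have hp0 : HasFDerivAt (fun z : R2 => z 0) (EuclideanSpace.proj (0 : Fin 2) :
      R2 →L[ℝ] ℝ) x := by
    have := (EuclideanSpace.proj (𝕜 := ℝ) (0 : Fin 2)).hasFDerivAt (x := x)
    exact this
  have hp1 : HasFDerivAt (fun z : R2 => z 1) (EuclideanSpace.proj (1 : Fin 2) :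
      R2 →L[ℝ] ℝ) x := by
    have := (EuclideanSpace.proj (𝕜 := ℝ) (1 : Fin 2)).hasFDerivAt (x := x)
    exact this
  have h1 : HasFDerivAt (fun z : R2 => TGaux.phi β z * z 0)
      (TGaux.phi β x • (EuclideanSpace.proj (0 : Fin 2)) + x 0 • ψ) x := hφ.mul hp0
  have h2 : HasFDerivAt (fun z : R2 => TGaux.phi β z * (-(z 1)))
      (TGaux.phi β x • (-(EuclideanSpace.proj (1 : Fin 2))) + (-(x 1)) • ψ) x :=
    hφ.mul hp1.neg
  have e0 := EuclideanSpace.single (0 : Fin 2) (1 : ℝ)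
  have d1 : pdR 0 (fun z => transversalGauge β z 1) x
      = TGaux.phi β x + x 0 * ψ (EuclideanSpace.single 0 1) := by
    rw [pdR, hA1, h1.fderiv]
    simp [EuclideanSpace.single_apply, smul_eq_mul]
  have d2 : pdR 1 (fun z => transversalGauge β z 0) x
      = -(TGaux.phi β x) + -(x 1) * ψ (EuclideanSpace.single 1 1) := by
    rw [pdR, hA0, h2.fderiv]
    simp [EuclideanSpace.single_apply, smul_eq_mul]
  have hx : x = x 0 • EuclideanSpace.single (0 : Fin 2) (1:ℝ)
      + x 1 • EuclideanSpace.single (1 : Fin 2) (1:ℝ) := by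
    ext i
    fin_cases i <;> simp [EuclideanSpace.single_apply]
  have hψx : ψ x = x 0 * ψ (EuclideanSpace.single 0 1) + x 1 * ψ (EuclideanSpace.single 1 1) := by
    conv_lhs => rw [hx]
    simp [map_add, _root_.map_smul, smul_eq_mul]
  have key := TGaux.two_phi_add_psi hβ x
  rw [d1, d2, ← key, hψx]
  ring
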